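/- arXiv:2208.11166 — 2 statements merged into one kernel-verified Lean document; each statement's English description precedes it below -/
import Mathlib

section
/- Let ε_n → 0⁺ and α_n → +∞ with α_n ≤ |log ε_n|, and let η̃_n(x) = f_{ε_n, ε_n α_n}(|x|) be the logarithmic cut-offs on ℝ². Then for every q with 2 < q < ∞, ε_n α_n · ‖∇η̃_n‖_{L^q(ℝ²)} → 0 as n → ∞. -/
open MeasureTheory Filter

/-- The radial logarithmic cut-off profile `f_{A,B}`. -/
noncomputable def fAB (A B : ℝ) (z : ℝ) : ℝ :=
  if z < A then 1
  else if z ≤ B then (Real.log z - Real.log B) / (Real.log A - Real.log B)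
  else 0

/-- The logarithmic cut-off `η̃(x) = f_{ε, εα}(|x|)` on ℝ². -/
noncomputable def etaTilde (ε α : ℝ) (x : EuclideanSpace ℝ (Fin 2)) : ℝ :=
  fAB ε (ε * α) ‖x‖

lemma fderiv_out_lt {e a : ℝ} {x : EuclideanSpace ℝ (Fin 2)} (hx : ‖x‖ < e) :
    fderiv ℝ (etaTilde e a) x = 0 := by
  have heq : etaTilde e a =ᶠ[nhds x] fun _ => (1:ℝ) := by
    filter_upwards [(isOpen_lt continuous_norm continuous_const).mem_nhds hx] with y hy
    simp [etaTilde, fAB, hy]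
  rw [heq.fderiv_eq, fderiv_fun_const]
  rfl

lemma fderiv_out_gt {e a : ℝ} (he : 0 < e) (ha : 1 < a) {x : EuclideanSpace ℝ (Fin 2)}
    (hx : e * a < ‖x‖) :
    fderiv ℝ (etaTilde e a) x = 0 := by
  have heq : etaTilde e a =ᶠ[nhds x] fun _ => (0:ℝ) := by
    filter_upwards [(isOpen_lt continuous_const continuous_norm).mem_nhds hx] with y hy
    have h1 : ¬ (‖y‖ < e) := by
      push_neg
      nlinarith
    simp [etaTilde, fAB, h1, not_le.2 hy]
  rw [heq.fderiv_eq, fderiv_fun_const]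
  rfl

lemma norm_fderiv_mid {e a : ℝ} (he : 0 < e) (ha : 1 < a)
    {x : EuclideanSpace ℝ (Fin 2)} (hx : ‖x‖ ∈ Set.Ioo e (e*a)) :
    ‖fderiv ℝ (etaTilde e a) x‖ = (‖x‖ * Real.log a)⁻¹ := by
  have hLa : 0 < Real.log a := Real.log_pos ha
  have hxn : ‖x‖ ≠ 0 := ne_of_gt (lt_trans he hx.1)
  set c : ℝ := (Real.log e - Real.log (e*a))⁻¹ with hc
  have heq : etaTilde e a =ᶠ[nhds x]
      fun y => (Real.log ‖y‖ - Real.log (e*a)) * c := by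
    have hU : IsOpen {y : EuclideanSpace ℝ (Fin 2) | e < ‖y‖ ∧ ‖y‖ < e*a} :=
      (isOpen_lt continuous_const continuous_norm).inter
        (isOpen_lt continuous_norm continuous_const)
    filter_upwards [hU.mem_nhds ⟨hx.1, hx.2⟩] with y hy
    simp only [etaTilde, fAB, not_lt.2 hy.1.le, if_false, hy.2.le, if_true, div_eq_mul_inv]
    rfl
  have hnd : DifferentiableAt ℝ (fun y : EuclideanSpace ℝ (Fin 2) => ‖y‖) x :=
    differentiableAt_id.norm ℝ (norm_ne_zero_iff.mp hxn)
  have hlog : HasFDerivAt (fun y : EuclideanSpace ℝ (Fin 2) => Real.log ‖y‖)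
      (‖x‖⁻¹ • fderiv ℝ (fun y : EuclideanSpace ℝ (Fin 2) => ‖y‖) x) x :=
    (Real.hasDerivAt_log hxn).comp_hasFDerivAt x hnd.hasFDerivAt
  have hF : HasFDerivAt (fun y : EuclideanSpace ℝ (Fin 2) => (Real.log ‖y‖ - Real.log (e*a)) * c)
      (c • (‖x‖⁻¹ • fderiv ℝ (fun y : EuclideanSpace ℝ (Fin 2) => ‖y‖) x)) x :=
    (hlog.sub_const _).mul_const c
  rw [heq.fderiv_eq, hF.fderiv]
  have h1 : ‖fderiv ℝ (fun y : EuclideanSpace ℝ (Fin 2) => ‖y‖) x‖ = 1 :=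
    norm_fderiv_norm hnd
  rw [norm_smul, norm_smul, h1, mul_one]
  have hce : Real.log e - Real.log (e*a) = - Real.log a := by
    rw [Real.log_mul he.ne' (by linarith)]; ring
  rw [hc, hce]
  rw [norm_inv, norm_neg, Real.norm_eq_abs, abs_of_pos hLa, norm_inv, Real.norm_eq_abs,
    abs_norm, mul_inv, mul_comm]

lemma integral_eq {e a : ℝ} (he : 0 < e) (ha : 1 < a) {q : ℝ} (hq : 2 < q) :
    ∫ x : EuclideanSpace ℝ (Fin 2), ‖fderiv ℝ (etaTilde e a) x‖ ^ q
      = 2 * (volume (Metric.ball (0:EuclideanSpace ℝ (Fin 2)) 1)).toReal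
        * ((e ^ (2-q) - (e*a) ^ (2-q)) / (q-2) * (Real.log a ^ q)⁻¹) := by
  set E := EuclideanSpace ℝ (Fin 2)
  set L := Real.log a with hL
  have hLpos : 0 < L := Real.log_pos ha
  have hB : e < e * a := by nlinarith
  have hq0 : q ≠ 0 := by linarith
  set G : ℝ → ℝ := Set.indicator (Set.Ioo e (e*a)) (fun r => ((r * L)⁻¹) ^ q) with hG
  have hae : (fun x : E => ‖fderiv ℝ (etaTilde e a) x‖ ^ q) =ᵐ[volume] fun x => G ‖x‖ := by
    have hs : volume (Metric.sphere (0:E) e ∪ Metric.sphere (0:E) (e*a)) = 0 := by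
      refine le_antisymm (le_trans (measure_union_le _ _) ?_) zero_le
      rw [Measure.addHaar_sphere, Measure.addHaar_sphere]; simp
    filter_upwards [measure_eq_zero_iff_ae_notMem.mp hs] with x hx
    simp only [Set.mem_union, Metric.mem_sphere, dist_zero_right, not_or] at hx
    rcases lt_trichotomy ‖x‖ e with h | h | h
    · rw [fderiv_out_lt h, hG, Set.indicator_of_notMem (by simp [Set.mem_Ioo]; intro h'; linarith)]
      simp [Real.zero_rpow hq0]
    · exact absurd h hx.1
    rcases lt_trichotomy ‖x‖ (e*a) with h2 | h2 | h2
    · rw [norm_fderiv_mid he ha ⟨h, h2⟩, hG, Set.indicator_of_mem (Set.mem_Ioo.mpr ⟨h, h2⟩)]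
    · exact absurd h2 hx.2
    · rw [fderiv_out_gt he ha h2, hG, Set.indicator_of_notMem (by simp [Set.mem_Ioo]; intro h'; linarith)]
      simp [Real.zero_rpow hq0]
  rw [integral_congr_ae hae, integral_fun_norm_addHaar volume G]
  rw [finrank_euclideanSpace_fin, nsmul_eq_mul, smul_eq_mul, Nat.cast_ofNat]
  have h1 : ∀ y : ℝ, y ^ (2-1) • G y
      = Set.indicator (Set.Ioo e (e*a)) (fun r => r * ((r * L)⁻¹) ^ q) y := by
    intro y
    by_cases hy : y ∈ Set.Ioo e (e*a)
    · rw [hG, Set.indicator_of_mem hy, Set.indicator_of_mem hy]; simp [smul_eq_mul]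
    · rw [hG, Set.indicator_of_notMem hy, Set.indicator_of_notMem hy]; simp
  rw [show (∫ y in Set.Ioi (0:ℝ), y ^ (2-1) • G y)
      = ∫ y in Set.Ioi (0:ℝ), Set.indicator (Set.Ioo e (e*a)) (fun r => r * ((r * L)⁻¹) ^ q) y
    from integral_congr_ae (Eventually.of_forall fun y => h1 y)]
  rw [setIntegral_indicator measurableSet_Ioo]
  have hsub : Set.Ioi (0:ℝ) ∩ Set.Ioo e (e*a) = Set.Ioo e (e*a) :=
    Set.inter_eq_self_of_subset_right fun y hy => lt_trans he hy.1
  rw [hsub]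
  have h2 : ∀ y ∈ Set.Ioo e (e*a), y * ((y * L)⁻¹) ^ q = y ^ (1-q) * (L ^ q)⁻¹ := by
    intro y hy
    have hy0 : 0 < y := lt_trans he hy.1
    rw [show (1:ℝ)-q = 1 + -q by ring, Real.rpow_add hy0, Real.rpow_one,
      Real.rpow_neg hy0.le, Real.inv_rpow (by positivity),
      Real.mul_rpow hy0.le hLpos.le, mul_inv]
    ring
  rw [setIntegral_congr_fun measurableSet_Ioo h2, integral_mul_const]
  have h3 : ∫ y in Set.Ioo e (e*a), y ^ (1-q) = (e ^ (2-q) - (e*a) ^ (2-q)) / (q-2) := by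
    rw [← integral_Ioc_eq_integral_Ioo, ← intervalIntegral.integral_of_le hB.le,
      integral_rpow (Or.inr ⟨by linarith, by
        simp [Set.uIcc_of_le hB.le]; intro h'; linarith⟩)]
    have : 1 - q + 1 = -(q-2) := by ring
    rw [this]
    rw [show (e*a) ^ (-(q-2)) = ((e*a) ^ (q-2))⁻¹ from Real.rpow_neg (by positivity) _,
      show e ^ (-(q-2)) = (e ^ (q-2))⁻¹ from Real.rpow_neg (by positivity) _,
      show e ^ (2-q) = (e ^ (q-2))⁻¹ by rw [← Real.rpow_neg (by positivity)]; ring_nf,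
      show (e*a) ^ (2-q) = ((e*a) ^ (q-2))⁻¹ by rw [← Real.rpow_neg (by positivity)]; ring_nf]
    have hne1 : q - 2 ≠ 0 := by linarith
    have hne2 : (2:ℝ) - q ≠ 0 := by linarith
    field_simp
    ring
  rw [h3, Measure.real]
  ring

/-- if `ε_n → 0⁺`, `α_n → +∞` with `α_n ≤ |log ε_n|`, then for every
`2 < q < ∞` one has `ε_n α_n ‖∇η̃_n‖_{L^q(ℝ²)} → 0`. -/
theorem stmt7 (ε α : ℕ → ℝ) (hεpos : ∀ n, 0 < ε n)
    (hε0 : Tendsto ε atTop (nhds 0))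
    (hα : Tendsto α atTop atTop)
    (hαlog : ∀ n, α n ≤ |Real.log (ε n)|)
    (q : ℝ) (hq : 2 < q) :
    Tendsto (fun n => ε n * α n *
        (∫ x : EuclideanSpace ℝ (Fin 2), ‖fderiv ℝ (etaTilde (ε n) (α n)) x‖ ^ q) ^ (1 / q))
      atTop (nhds 0) := by
  have hq0 : (0:ℝ) < q := by linarith
  have hq2 : (0:ℝ) < q - 2 := by linarith
  set K : ℝ := 2 * (volume (Metric.ball (0:EuclideanSpace ℝ (Fin 2)) 1)).toReal with hK
  have hKnn : 0 ≤ K := by positivity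
  set C : ℝ := (K / (q-2)) ^ (1/q) with hC
  have hCnn : 0 ≤ C := Real.rpow_nonneg (by positivity) _
  set F : ℕ → ℝ := fun n => ε n * α n *
      (∫ x : EuclideanSpace ℝ (Fin 2), ‖fderiv ℝ (etaTilde (ε n) (α n)) x‖ ^ q) ^ (1 / q) with hF
  set g : ℕ → ℝ := fun n => -C * (Real.log (ε n) * (ε n) ^ (2/q)) with hg
  -- eventual hypotheses
  have hev : ∀ᶠ n in atTop, ε n < 1 ∧ Real.exp 1 ≤ α n := by
    filter_upwards [hε0.eventually (eventually_lt_nhds (by norm_num : (0:ℝ) < 1)),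
      hα.eventually_ge_atTop (Real.exp 1)] with n h1 h2
    exact ⟨h1, h2⟩
  -- nonneg
  have hFnn : ∀ᶠ n in atTop, 0 ≤ F n := by
    filter_upwards [hev] with n ⟨h1, h2⟩
    have ha1 : (0:ℝ) < α n := lt_of_lt_of_le (Real.exp_pos 1) h2
    exact mul_nonneg (mul_nonneg (hεpos n).le ha1.le) (Real.rpow_nonneg
      (integral_nonneg fun x => Real.rpow_nonneg (norm_nonneg _) q) _)
  -- bound
  have hFg : ∀ᶠ n in atTop, F n ≤ g n := by
    filter_upwards [hev] with n ⟨h1, h2⟩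
    have ha1 : 1 < α n := lt_of_lt_of_le (by nlinarith [Real.add_one_le_exp 1]) h2
    have hL1 : 1 ≤ Real.log (α n) := by
      rw [show (1:ℝ) = Real.log (Real.exp 1) from (Real.log_exp 1).symm]
      exact Real.log_le_log (Real.exp_pos 1) h2
    have hLpos : 0 < Real.log (α n) := by linarith
    have he := hεpos n
    have hIle : (∫ x : EuclideanSpace ℝ (Fin 2), ‖fderiv ℝ (etaTilde (ε n) (α n)) x‖ ^ q)
        ≤ K / (q-2) * (ε n) ^ (2-q) * (Real.log (α n) ^ q)⁻¹ := by
      calc (∫ x : EuclideanSpace ℝ (Fin 2), ‖fderiv ℝ (etaTilde (ε n) (α n)) x‖ ^ q)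
          = K * ((ε n ^ (2-q) - (ε n * α n) ^ (2-q)) / (q-2) * (Real.log (α n) ^ q)⁻¹) :=
            integral_eq he ha1 hq
        _ ≤ K * (ε n ^ (2-q) / (q-2) * (Real.log (α n) ^ q)⁻¹) := by
            gcongr
            exact sub_le_self _ (Real.rpow_nonneg (by positivity) _)
        _ = K / (q-2) * (ε n) ^ (2-q) * (Real.log (α n) ^ q)⁻¹ := by ring
    have hXle : (∫ x : EuclideanSpace ℝ (Fin 2), ‖fderiv ℝ (etaTilde (ε n) (α n)) x‖ ^ q) ^ (1/q)
        ≤ C * (ε n) ^ ((2-q)/q) * (Real.log (α n))⁻¹ := by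
      have h0 : (0:ℝ) ≤ ∫ x : EuclideanSpace ℝ (Fin 2), ‖fderiv ℝ (etaTilde (ε n) (α n)) x‖ ^ q :=
        integral_nonneg fun x => Real.rpow_nonneg (norm_nonneg _) q
      calc _ ≤ (K / (q-2) * (ε n) ^ (2-q) * (Real.log (α n) ^ q)⁻¹) ^ (1/q) :=
            Real.rpow_le_rpow h0 hIle (by positivity)
        _ = C * (ε n) ^ ((2-q)/q) * (Real.log (α n))⁻¹ := by
            rw [Real.mul_rpow (by positivity) (by positivity),
              Real.mul_rpow (by positivity) (by positivity),
              ← Real.rpow_mul he.le, mul_one_div,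
              Real.inv_rpow (by positivity), ← Real.rpow_mul hLpos.le, mul_one_div,
              div_self hq0.ne', Real.rpow_one]
    have hεα : (0:ℝ) ≤ ε n * α n := mul_nonneg he.le (by linarith)
    have heps : ε n * ε n ^ ((2-q)/q) = ε n ^ (2/q) := by
      nth_rewrite 1 [← Real.rpow_one (ε n)]
      rw [← Real.rpow_add he]
      congr 1
      field_simp
      ring
    have hlogε : α n ≤ -Real.log (ε n) := by
      have h := hαlog n
      rwa [abs_of_neg (Real.log_neg he h1)] at h
    calc F n ≤ ε n * α n * (C * (ε n) ^ ((2-q)/q) * (Real.log (α n))⁻¹) :=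
          mul_le_mul_of_nonneg_left hXle hεα
      _ = C * α n * ε n ^ (2/q) * (Real.log (α n))⁻¹ := by rw [← heps]; ring
      _ ≤ C * α n * ε n ^ (2/q) * 1 := by
          have : (Real.log (α n))⁻¹ ≤ 1 := inv_le_one_of_one_le₀ hL1
          have hnn : (0:ℝ) ≤ C * α n * ε n ^ (2/q) :=
            mul_nonneg (mul_nonneg hCnn (by linarith)) (Real.rpow_nonneg he.le _)
          nlinarith
      _ = C * ε n ^ (2/q) * α n := by ring
      _ ≤ C * ε n ^ (2/q) * (-Real.log (ε n)) := by
          have hnn : (0:ℝ) ≤ C * ε n ^ (2/q) :=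
            mul_nonneg hCnn (Real.rpow_nonneg he.le _)
          nlinarith
      _ = g n := by simp only [hg]; ring
  have hgt : Tendsto g atTop (nhds 0) := by
    have h2q : (0:ℝ) < 2/q := by positivity
    have hεin : Tendsto ε atTop (nhdsWithin 0 (Set.Ioi 0)) :=
      tendsto_nhdsWithin_of_tendsto_nhds_of_eventually_within _ hε0
        (Eventually.of_forall fun n => hεpos n)
    have h := ((tendsto_log_mul_rpow_nhdsGT_zero h2q).comp hεin).const_mul (-C)
    simpa [hg, Function.comp] using h
  exact squeeze_zero' hFnn hFg hgt
end

section
/- Let H be a Hilbert space, T > 0, and let (f_n) be a sequence of functions f_n : (0,T) → H with distributional derivative ∂_t f_n = g_n¹ + g_n², where ‖g_n¹‖_{L^p(0,T;H)} ≤ C for some p > 1 and C independent of n, and ‖g_n²‖_{L¹(0,T;H)} → 0 as n → ∞. Then each f_n has a continuous representative and the family (f_n) is equicontinuous on [0,T] with values in H. -/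
open MeasureTheory Filter

/-- if `∂_t f_n = g_n¹ + g_n²` with `g_n¹` bounded in `L^p(0,T;H)`, `p > 1`,
and `g_n² → 0` in `L¹(0,T;H)`, then the `f_n` are continuous and equicontinuous on `[0,T]`. -/
theorem stmt11 {H : Type*} [NormedAddCommGroup H] [InnerProductSpace ℝ H] [CompleteSpace H]
    (T : ℝ) (hT : 0 < T)
    (f : ℕ → ℝ → H) (g1 g2 : ℕ → ℝ → H)
    (p C : ℝ) (hp : 1 < p) (hC : 0 < C)
    (hint1 : ∀ n, IntervalIntegrable (g1 n) volume 0 T)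
    (hint2 : ∀ n, IntervalIntegrable (g2 n) volume 0 T)
    (hintp : ∀ n, IntervalIntegrable (fun t => ‖g1 n t‖ ^ p) volume 0 T)
    (hbound : ∀ n, (∫ t in (0:ℝ)..T, ‖g1 n t‖ ^ p) ^ (1 / p) ≤ C)
    (hg2 : Tendsto (fun n => ∫ t in (0:ℝ)..T, ‖g2 n t‖) atTop (nhds 0))
    (hderiv : ∀ n, ∀ t ∈ Set.Icc (0:ℝ) T,
      f n t = f n 0 + ∫ s in (0:ℝ)..t, (g1 n s + g2 n s)) :
    (∀ n, ContinuousOn (f n) (Set.Icc 0 T)) ∧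
      ∀ δ > (0:ℝ), ∃ h > (0:ℝ), ∃ N : ℕ, ∀ n ≥ N,
        ∀ s ∈ Set.Icc (0:ℝ) T, ∀ t ∈ Set.Icc (0:ℝ) T,
          |s - t| ≤ h → ‖f n t - f n s‖ ≤ δ := by
  set q : ℝ := Real.conjExponent p with hq
  have hpq : p.HolderConjugate q := Real.HolderConjugate.conjExponent hp
  -- Hölder estimate for g1
  have holder : ∀ n, ∀ a b : ℝ, 0 ≤ a → a ≤ b → b ≤ T →
      (∫ t in a..b, ‖g1 n t‖) ≤ C * (b - a) ^ (1 / q) := by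
    intro n a b ha hab hbT
    have hsub : Set.Ioc a b ⊆ Set.Ioc 0 T := Set.Ioc_subset_Ioc ha hbT
    have hintpOn : IntegrableOn (fun t => ‖g1 n t‖ ^ p) (Set.Ioc 0 T) volume := (hintp n).1
    have hintpab : IntegrableOn (fun t => ‖g1 n t‖ ^ p) (Set.Ioc a b) volume :=
      hintpOn.mono_set hsub
    have hmeas : AEStronglyMeasurable (g1 n) (volume.restrict (Set.Ioc a b)) := by
      exact ((hint1 n).1.aestronglyMeasurable).mono_measure (Measure.restrict_mono hsub le_rfl)
    haveI : IsFiniteMeasure (volume.restrict (Set.Ioc a b)) :=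
      ⟨by rw [Measure.restrict_apply_univ]; exact measure_Ioc_lt_top⟩
    have hmem : MemLp (g1 n) (ENNReal.ofReal p) (volume.restrict (Set.Ioc a b)) := by
      have h1 : MemLp (fun t => ‖g1 n t‖ ^ (ENNReal.ofReal p).toReal)
          (ENNReal.ofReal p / ENNReal.ofReal p) (volume.restrict (Set.Ioc a b)) := by
        rw [ENNReal.div_self (by simp [hpq.pos]) (by simp)]
        rw [memLp_one_iff_integrable]
        simpa [ENNReal.toReal_ofReal hpq.nonneg] using hintpab.integrable
      exact (memLp_norm_rpow_iff hmeas (by simp [hpq.pos]) (by simp)).mp h1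
    have hmem1 : MemLp (fun _ : ℝ => (1:ℝ)) (ENNReal.ofReal q)
        (volume.restrict (Set.Ioc a b)) := memLp_const 1
    have hH := integral_mul_le_Lp_mul_Lq_of_nonneg (μ := volume.restrict (Set.Ioc a b))
      (f := fun t => ‖g1 n t‖) (g := fun _ => (1:ℝ)) hpq
      (Eventually.of_forall fun t => norm_nonneg _)
      (Eventually.of_forall fun _ => zero_le_one) hmem.norm hmem1
    have e1 : (∫ t in Set.Ioc a b, ‖g1 n t‖ * (1:ℝ)) = ∫ t in a..b, ‖g1 n t‖ := by
      rw [intervalIntegral.integral_of_le hab]; simp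
    have e2 : (∫ _ in Set.Ioc a b, (1:ℝ) ^ q) = b - a := by
      simp [Real.one_rpow, Real.volume_Ioc, ENNReal.toReal_ofReal (sub_nonneg.mpr hab), hab]
    rw [e1, e2] at hH
    refine hH.trans ?_
    refine mul_le_mul_of_nonneg_right ?_ (Real.rpow_nonneg (sub_nonneg.mpr hab) _)
    refine le_trans ?_ (hbound n)
    rw [intervalIntegral.integral_of_le hT.le]
    refine Real.rpow_le_rpow (integral_nonneg fun t => Real.rpow_nonneg (norm_nonneg _) _)
      ?_ hpq.one_div_nonneg
    exact setIntegral_mono_set hintpOn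
      (Eventually.of_forall fun t => Real.rpow_nonneg (norm_nonneg _) _)
      (Eventually.of_forall hsub)
  -- key increment estimate
  have key : ∀ n, ∀ a b : ℝ, 0 ≤ a → a ≤ b → b ≤ T →
      ‖f n b - f n a‖ ≤ C * (b - a) ^ (1 / q) + ∫ t in (0:ℝ)..T, ‖g2 n t‖ := by
    intro n a b ha hab hbT
    have ha' : a ∈ Set.Icc (0:ℝ) T := ⟨ha, hab.trans hbT⟩
    have hb' : b ∈ Set.Icc (0:ℝ) T := ⟨ha.trans hab, hbT⟩
    have hsub1 : IntervalIntegrable (g1 n) volume a b :=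
      (hint1 n).mono_set (by rw [Set.uIcc_of_le hT.le, Set.uIcc_of_le hab]
                             exact Set.Icc_subset_Icc ha hbT)
    have hsub2 : IntervalIntegrable (g2 n) volume a b :=
      (hint2 n).mono_set (by rw [Set.uIcc_of_le hT.le, Set.uIcc_of_le hab]
                             exact Set.Icc_subset_Icc ha hbT)
    have h0b1 : IntervalIntegrable (g1 n) volume 0 b :=
      (hint1 n).mono_set (by rw [Set.uIcc_of_le hT.le, Set.uIcc_of_le hb'.1]
                             exact Set.Icc_subset_Icc le_rfl hbT)
    have h0b2 : IntervalIntegrable (g2 n) volume 0 b :=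
      (hint2 n).mono_set (by rw [Set.uIcc_of_le hT.le, Set.uIcc_of_le hb'.1]
                             exact Set.Icc_subset_Icc le_rfl hbT)
    have h0a1 : IntervalIntegrable (g1 n) volume 0 a :=
      (hint1 n).mono_set (by rw [Set.uIcc_of_le hT.le, Set.uIcc_of_le ha]
                             exact Set.Icc_subset_Icc le_rfl (hab.trans hbT))
    have h0a2 : IntervalIntegrable (g2 n) volume 0 a :=
      (hint2 n).mono_set (by rw [Set.uIcc_of_le hT.le, Set.uIcc_of_le ha]
                             exact Set.Icc_subset_Icc le_rfl (hab.trans hbT))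
    have hdiff : f n b - f n a = (∫ s in a..b, g1 n s) + ∫ s in a..b, g2 n s := by
      rw [hderiv n b hb', hderiv n a ha']
      have : (f n 0 + ∫ s in (0:ℝ)..b, (g1 n s + g2 n s))
          - (f n 0 + ∫ s in (0:ℝ)..a, (g1 n s + g2 n s))
          = (∫ s in (0:ℝ)..b, (g1 n s + g2 n s)) - ∫ s in (0:ℝ)..a, (g1 n s + g2 n s) := by
        abel
      rw [this, intervalIntegral.integral_interval_sub_left (h0b1.add h0b2) (h0a1.add h0a2),
        intervalIntegral.integral_add hsub1 hsub2]
    rw [hdiff]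
    refine (norm_add_le _ _).trans (add_le_add ?_ ?_)
    · exact (intervalIntegral.norm_integral_le_integral_norm hab).trans (holder n a b ha hab hbT)
    · refine (intervalIntegral.norm_integral_le_integral_norm hab).trans ?_
      refine intervalIntegral.integral_mono_interval ha hab hbT
        (Eventually.of_forall fun t => norm_nonneg _) (hint2 n).norm
  constructor
  · -- continuity
    intro n
    have hcont : ContinuousOn (fun t => f n 0 + ∫ s in (0:ℝ)..t, (g1 n s + g2 n s))
        (Set.Icc 0 T) := by
      have : ContinuousOn (fun t => ∫ s in (0:ℝ)..t, (g1 n s + g2 n s)) (Set.Icc 0 T) := by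
        have h := intervalIntegral.continuousOn_primitive_interval'
          ((hint1 n).add (hint2 n)) (Set.left_mem_uIcc (a := (0:ℝ)) (b := T))
        rwa [Set.uIcc_of_le hT.le] at h
      exact continuousOn_const.add this
    exact hcont.congr (hderiv n)
  · -- equicontinuity
    intro δ hδ
    obtain ⟨N, hN⟩ := (Metric.tendsto_atTop.mp hg2 (δ / 2) (half_pos hδ))
    refine ⟨(δ / (2 * C)) ^ q, Real.rpow_pos_of_pos (div_pos hδ (by linarith)) q, N,
      fun n hn s hs t ht hst => ?_⟩
    have hg2n : (∫ t in (0:ℝ)..T, ‖g2 n t‖) ≤ δ / 2 := by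
      have := hN n hn
      rw [Real.dist_eq, sub_zero] at this
      exact (le_abs_self _).trans this.le
    have hCpos : (0:ℝ) < 2 * C := by linarith
    have main : ∀ a b : ℝ, 0 ≤ a → a ≤ b → b ≤ T → b - a ≤ (δ / (2 * C)) ^ q →
        ‖f n b - f n a‖ ≤ δ := by
      intro a b ha hab hbT hsmall
      refine (key n a b ha hab hbT).trans ?_
      have h1 : C * (b - a) ^ (1 / q) ≤ δ / 2 := by
        have : (b - a) ^ (1 / q) ≤ ((δ / (2 * C)) ^ q) ^ (1 / q) :=
          Real.rpow_le_rpow (sub_nonneg.mpr hab) hsmall hpq.symm.one_div_nonneg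
        have heq : ((δ / (2 * C)) ^ q) ^ (1 / q) = δ / (2 * C) := by
          rw [one_div, Real.rpow_rpow_inv (le_of_lt (div_pos hδ hCpos)) hpq.symm.ne_zero]
        rw [heq] at this
        calc C * (b - a) ^ (1 / q) ≤ C * (δ / (2 * C)) :=
              mul_le_mul_of_nonneg_left this hC.le
          _ = δ / 2 := by field_simp
      linarith
    rcases le_total s t with h | h
    · have : |s - t| = t - s := by rw [abs_sub_comm]; exact abs_of_nonneg (by linarith)
      exact main s t hs.1 h ht.2 (by rw [← this]; exact hst)
    · have : |s - t| = s - t := abs_of_nonneg (by linarith)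
      rw [norm_sub_rev]
      exact main t s ht.1 h hs.2 (by rw [← this]; exact hst)
end
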